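/- In a monoidal category with an idempotent object (M, μ), for any forest T = (τ_1,...,τ_k) with n leaves and k roots and any forest S with n leaves and m roots, the assignment T ↦ μ_T = μ_{τ_1} ⊗ ... ⊗ μ_{τ_k} : M^{⊗n} → M^{⊗k} is functorial: μ of a composite (grafting) of forests equals the composite of the μ's, and μ of the identity forest is the identity. -/

import Mathlib

inductive BinTree : Type
  | leaf : BinTree
  | node : BinTree → BinTree → BinTree
deriving DecidableEq

/-- The number of leaves of a binary tree. -/
def BinTree.leaves : BinTree → ℕ
  | .leaf => 1
  | .node l r => l.leaves + r.leaves

/-- Graft trees onto the leaves of a tree (left to right), threading the list: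
returns the grafted tree together with the unused trees. -/
def BinTree.graftAux : BinTree → List BinTree → BinTree × List BinTree
  | .leaf, [] => (.leaf, [])
  | .leaf, t :: ts => (t, ts)
  | .node l r, ts =>
      ((BinTree.node (l.graftAux ts).1 ((r.graftAux (l.graftAux ts).2)).1),
        (r.graftAux (l.graftAux ts).2).2)

/-- Graft the trees of `ts` onto the leaves of `t`, in left-to-right order. -/
def BinTree.graft (t : BinTree) (ts : List BinTree) : BinTree := (t.graftAux ts).1

/-- `σ` is a subtree of `ρ` (sharing the same root) iff `ρ` is obtained from `σ`
by grafting trees onto its leaves. -/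
def BinTree.IsSubtree (σ ρ : BinTree) : Prop :=
  ∃ ts : List BinTree, ts.length = σ.leaves ∧ ρ = σ.graft ts

/-- `ω_i`: attach the two-leafed tree Y to the `i`-th leaf (0-indexed) of a tree. -/
def BinTree.expand : BinTree → ℕ → BinTree
  | .leaf, _ => .node .leaf .leaf
  | .node l r, i =>
      if i < l.leaves then .node (l.expand i) r else .node l (r.expand (i - l.leaves))

def listGraft : List BinTree → List BinTree → List BinTree
  | [], _ => []
  | t :: ts, fs => (t.graftAux fs).1 :: listGraft ts (t.graftAux fs).2

open CategoryTheory MonoidalCategory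

variable {C : Type*} [Category C] [MonoidalCategory C]

/-- The tensor power of `M` shaped by a binary tree (one factor `M` per leaf). -/
def treePow (M : C) : BinTree → C
  | .leaf => M
  | .node l r => treePow M l ⊗ treePow M r

/-- The tensor power of `M` shaped by a forest: `M^{⊗n}` where `n` is the total number
of leaves, bracketed tree-by-tree. -/
def forestPow (M : C) : List BinTree → C
  | [] => 𝟙_ C
  | t :: ts => treePow M t ⊗ forestPow M ts

/-- `μ_τ : M^{⊗n} ≅ M` for an `n`-leafed tree `τ`. -/
def muTree (M : C) (μ : M ⊗ M ≅ M) : (τ : BinTree) → (treePow M τ ≅ M)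
  | .leaf => Iso.refl M
  | .node l r => (tensorIso (muTree M μ l) (muTree M μ r)) ≪≫ μ

/-- `μ_T = μ_{τ₁} ⊗ ... ⊗ μ_{τ_k} : M^{⊗n} ≅ M^{⊗k}` for a forest `T` with `n` leaves
and `k` roots. -/
def muForest (M : C) (μ : M ⊗ M ≅ M) :
    (T : List BinTree) → (forestPow M T ≅ forestPow M (List.replicate T.length .leaf))
  | [] => Iso.refl _
  | t :: ts => tensorIso (muTree M μ t) (muForest M μ ts)

/-- The morphism `μ_S` reshaped along a tree `t`: applying `μ` on each grafted piece of
`t.graft ts` yields a map `M^{⊗(leaves of graft)} ⟶ M^{⊗(leaves of t)}`, tree-shaped. -/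
def muAlong (M : C) (μ : M ⊗ M ≅ M) :
    (t : BinTree) → (ts : List BinTree) → (treePow M (t.graft ts) ⟶ treePow M t)
  | .leaf, [] => 𝟙 M
  | .leaf, s :: _ => (muTree M μ s).hom
  | .node l r, ts => (muAlong M μ l ts) ⊗ₘ (muAlong M μ r (l.graftAux ts).2)

/-- The morphism `μ_S` reshaped along a forest `T`. -/
def muForestAlong (M : C) (μ : M ⊗ M ≅ M) :
    (T : List BinTree) → (S : List BinTree) → (forestPow M (listGraft T S) ⟶ forestPow M T)
  | [], _ => 𝟙 (𝟙_ C)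
  | t :: ts, fs => (muAlong M μ t fs) ⊗ₘ (muForestAlong M μ ts (t.graftAux fs).2)

theorem listGraft_length (T S : List BinTree) : (listGraft T S).length = T.length := by
  induction T generalizing S with
  | nil => rfl
  | cons t ts ih => simp [listGraft, ih]

lemma id_tensor_eqToHom (M : C) {A B : C} (h : A = B) {h2 : M ⊗ A = M ⊗ B} :
    (𝟙 M ⊗ₘ eqToHom h : M ⊗ A ⟶ M ⊗ B) = eqToHom h2 := by
  subst h; simp

lemma muTree_graft (M : C) (μ : M ⊗ M ≅ M) : ∀ (t : BinTree) (ts : List BinTree),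
    (muTree M μ (t.graft ts)).hom = muAlong M μ t ts ≫ (muTree M μ t).hom
  | .leaf, [] => (Category.id_comp _).symm
  | .leaf, s :: ss => (Category.comp_id _).symm
  | .node l r, ts => by
      have hl : (muTree M μ (l.graftAux ts).1).hom
          = muAlong M μ l ts ≫ (muTree M μ l).hom := muTree_graft M μ l ts
      have hr : (muTree M μ (r.graftAux (l.graftAux ts).2).1).hom
          = muAlong M μ r (l.graftAux ts).2 ≫ (muTree M μ r).hom :=
        muTree_graft M μ r (l.graftAux ts).2
      show (muTree M μ (.node (l.graftAux ts).1 ((r.graftAux (l.graftAux ts).2)).1)).hom = _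
      simp only [muTree, muAlong, Iso.trans_hom, tensorIso_hom]
      erw [Iso.trans_hom, Iso.trans_hom, tensorIso_hom, tensorIso_hom]
      rw [hl, hr]
      erw [tensorHom_comp_tensorHom_assoc]
      rfl

lemma muForest_graft (M : C) (μ : M ⊗ M ≅ M) : ∀ (T S : List BinTree),
    (muForest M μ (listGraft T S)).hom =
      muForestAlong M μ T S ≫ (muForest M μ T).hom ≫
        eqToHom (by rw [listGraft_length])
  | [], S => by simp [listGraft, muForest, muForestAlong]; exact (Category.id_comp _).symm
  | t :: ts, S => by
      have ih := muForest_graft M μ ts (t.graftAux S).2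
      have ht : (muTree M μ (t.graftAux S).1).hom
          = muAlong M μ t S ≫ (muTree M μ t).hom := muTree_graft M μ t S
      simp only [listGraft, muForest, muForestAlong, tensorIso_hom]
      erw [tensorIso_hom, tensorIso_hom]
      rw [ht, ih]
      erw [← tensorHom_comp_tensorHom]
      congr 1
      conv_lhs => rw [← Category.comp_id (muTree M μ t).hom]
      erw [← tensorHom_comp_tensorHom]
      congr 1
      exact id_tensor_eqToHom M _

/-- Functoriality of `T ↦ μ_T`: the map attached to a grafting composite of forests is
the composite of the attached maps, and the map attached to an identity forest (a forest
of trivial trees) is the identity. -/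
theorem muForest_functorial (M : C) (μ : M ⊗ M ≅ M) :
    (∀ (T S : List BinTree), (S.length = (T.map BinTree.leaves).sum) →
      (muForest M μ (listGraft T S)).hom =
        muForestAlong M μ T S ≫ (muForest M μ T).hom ≫
          eqToHom (by rw [listGraft_length])) ∧
    (∀ k : ℕ, (muForest M μ (List.replicate k .leaf)).hom =
      eqToHom (by rw [List.length_replicate])) := by
  constructor
  · intro T S _
    exact muForest_graft M μ T S
  · intro k
    induction k with
    | zero => simp [muForest]
    | succ n ih =>
        simp only [List.replicate_succ, muForest, tensorIso_hom, muTree, Iso.refl_hom,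
          List.length_replicate, eqToHom_refl] at ih ⊢
        erw [tensorIso_hom, ih]
        exact id_tensor_eqToHom M _
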